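/- arXiv:2502.02898 — 3 statements merged into one kernel-verified Lean document; each statement's English description precedes it below -/
import Mathlib

section
/- Let f be in the class BT_B with Taylor coefficients a_n, and let Γ_1 = −a_2/2, Γ_2 = −(1/2)(a_3 − (3/2)a_2²) be the first two logarithmic coefficients of the inverse function of f. Then |Γ_2| − |Γ_1| ≤ 1/12. -/
open Complex Metric

/-- Principal branch of the square root: `w^(1/2) = exp((1/2) * Log w)`. -/
noncomputable def psqrt (w : ℂ) : ℂ := Complex.exp ((1/2 : ℂ) * Complex.log w)

/-- The `n`-th Taylor coefficient of `f` at `0`, i.e. `f^(n)(0)/n!`. -/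
noncomputable def tCoeff (f : ℂ → ℂ) (n : ℕ) : ℂ := iteratedDeriv n f 0 / n.factorial

/-- The class `BT_B` of bounded turning functions associated with the bean-shaped domain:
`f` is analytic on the unit disk, `f 0 = 0`, `f' 0 = 1`, `f` injective on the disk,
and `f'(z) = (1 + tanh (ω z))^(1/2)` for a Schwarz function `ω`. -/
def IsBTB (f : ℂ → ℂ) : Prop :=
  AnalyticOnNhd ℂ f (ball 0 1) ∧ f 0 = 0 ∧ deriv f 0 = 1 ∧
  Set.InjOn f (ball 0 1) ∧
  ∃ ω : ℂ → ℂ, AnalyticOnNhd ℂ ω (ball 0 1) ∧ ω 0 = 0 ∧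
    (∀ z ∈ ball (0:ℂ) 1, ‖ω z‖ < 1) ∧
    (∀ z ∈ ball (0:ℂ) 1, deriv f z = psqrt (1 + Complex.tanh (ω z)))

lemma coeff_bound {ω : ℂ → ℂ} (hωa : AnalyticOnNhd ℂ ω (ball 0 1))
    (hb : ∀ z ∈ ball (0:ℂ) 1, ‖ω z‖ < 1) (n : ℕ) :
    ‖iteratedDeriv n ω 0‖ ≤ n.factorial := by
  have key : ∀ r : ℝ, r ∈ Set.Ioo (0:ℝ) 1 →
      ‖iteratedDeriv n ω 0‖ ≤ n.factorial * (r⁻¹) ^ n := by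
    intro r hr
    set R : NNReal := ⟨r, hr.1.le⟩ with hRdef
    have hRpos : 0 < R := hr.1
    have hsub : closedBall (0:ℂ) r ⊆ ball 0 1 := by
      apply closedBall_subset_ball; exact_mod_cast hr.2
    have hd : DifferentiableOn ℂ ω (closedBall 0 (R:ℝ)) :=
      fun z hz => ((hωa z (hsub hz)).differentiableAt).differentiableWithinAt
    have h := hd.hasFPowerSeriesOnBall hRpos
    set p := cauchyPowerSeries ω 0 R with hp
    have hRr : |(R:ℝ)| = r := by rw [show (R:ℝ) = r from rfl, abs_of_pos hr.1]
    have hfac := h.factorial_smul (1:ℂ) n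
    have hit : iteratedDeriv n ω 0 = iteratedFDeriv ℂ n ω 0 (fun _ => 1) :=
      iteratedDeriv_eq_iteratedFDeriv
    have h1 : ‖iteratedDeriv n ω 0‖ = n.factorial * ‖p n (fun _ => (1:ℂ))‖ := by
      rw [hit, ← hfac]
      simp [norm_smul]
    have h2 : ‖p n (fun _ => (1:ℂ))‖ ≤ ‖p n‖ := by
      have := (p n).le_opNorm (fun _ => (1:ℂ))
      simpa using this
    have h3 : ‖p n‖ ≤ ((2 * Real.pi)⁻¹ * ∫ θ : ℝ in (0)..2 * Real.pi,
        ‖ω (circleMap 0 R θ)‖) * |(R:ℝ)|⁻¹ ^ n := norm_cauchyPowerSeries_le ω 0 R n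
    have hcont : Continuous (fun θ : ℝ => ‖ω (circleMap 0 (R:ℝ) θ)‖) := by
      apply Continuous.norm
      apply continuous_iff_continuousAt.2
      intro θ
      have hmem : circleMap 0 (R:ℝ) θ ∈ ball (0:ℂ) 1 := by
        simp only [mem_ball, dist_zero_right]
        rw [show ‖circleMap 0 (R:ℝ) θ‖ = ‖circleMap 0 (R:ℝ) θ‖ from rfl]
        rw [norm_circleMap_zero, hRr]; exact hr.2
      exact ((hωa _ hmem).continuousAt).comp (continuous_circleMap 0 (R:ℝ)).continuousAt
    have hint : (∫ θ : ℝ in (0)..2 * Real.pi, ‖ω (circleMap 0 (R:ℝ) θ)‖) ≤ 2 * Real.pi := by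
      calc (∫ θ : ℝ in (0)..2 * Real.pi, ‖ω (circleMap 0 (R:ℝ) θ)‖)
          ≤ ∫ _ : ℝ in (0)..2 * Real.pi, (1:ℝ) := by
            apply intervalIntegral.integral_mono_on Real.two_pi_pos.le
              (hcont.intervalIntegrable _ _) (intervalIntegrable_const)
            intro θ _
            have hmem : circleMap 0 (R:ℝ) θ ∈ ball (0:ℂ) 1 := by
              simp only [mem_ball, dist_zero_right]
              rw [show ‖circleMap 0 (R:ℝ) θ‖ = ‖circleMap 0 (R:ℝ) θ‖ from rfl]
              rw [norm_circleMap_zero, hRr]; exact hr.2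
            exact (hb _ hmem).le
        _ = 2 * Real.pi := by simp
    calc ‖iteratedDeriv n ω 0‖ = n.factorial * ‖p n (fun _ => (1:ℂ))‖ := h1
      _ ≤ n.factorial * (((2 * Real.pi)⁻¹ * (2 * Real.pi)) * |(R:ℝ)|⁻¹ ^ n) := by
          apply mul_le_mul_of_nonneg_left _ (by positivity)
          refine h2.trans (h3.trans ?_)
          apply mul_le_mul_of_nonneg_right _ (by positivity)
          apply mul_le_mul_of_nonneg_left hint (by positivity)
      _ = n.factorial * (r⁻¹) ^ n := by
          rw [inv_mul_cancel₀ Real.two_pi_pos.ne', one_mul, hRr]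
  -- limit as r → 1⁻
  have htend : Filter.Tendsto (fun r : ℝ => (n.factorial : ℝ) * (r⁻¹) ^ n)
      (nhdsWithin 1 (Set.Iio 1)) (nhds ((n.factorial : ℝ))) := by
    have : Filter.Tendsto (fun r : ℝ => (n.factorial : ℝ) * (r⁻¹) ^ n)
        (nhds 1) (nhds ((n.factorial : ℝ) * ((1:ℝ)⁻¹) ^ n)) := by
      apply Filter.Tendsto.const_mul
      exact ((continuousAt_inv₀ one_ne_zero).pow n)
    simpa using this.mono_left nhdsWithin_le_nhds
  refine ge_of_tendsto htend ?_
  filter_upwards [Ioo_mem_nhdsLT_of_mem (by norm_num : (1:ℝ) ∈ Set.Ioc (0:ℝ) 1)] with r hr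
  exact key r hr

lemma cosh_ne_zero_of_abs_lt_one {w : ℂ} (hw : ‖w‖ < 1) : Complex.cosh w ≠ 0 := by
  intro h
  have h2 : Complex.cos (w * I) = 0 := by
    rw [← Complex.cosh_mul_I]
    rw [show w * I * I = -w by simp [mul_assoc, Complex.I_mul_I]]
    rw [Complex.cosh_neg]; exact h
  rw [Complex.cos_eq_zero_iff] at h2
  obtain ⟨k, hk⟩ := h2
  have habs : ‖w * I‖ = ‖w‖ := by simp
  rw [hk] at habs
  have h3 : ‖(2 * (k:ℂ) + 1) * (Real.pi:ℂ) / 2‖ = |(2*(k:ℝ)+1)| * Real.pi / 2 := by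
    rw [show (2 * (k:ℂ) + 1) * (Real.pi:ℂ) / 2 = (((2*(k:ℝ)+1) * Real.pi / 2 : ℝ) : ℂ) by push_cast; ring]
    rw [Complex.norm_real, Real.norm_eq_abs, abs_div, abs_mul, abs_of_pos Real.pi_pos]
    simp
  rw [h3] at habs
  have h4 : (1:ℝ) ≤ |(2*(k:ℝ)+1)| := by
    have : (2*k+1 : ℤ) ≠ 0 := by omega
    have h5 : (1:ℤ) ≤ |2*k+1| := by
      rcases le_or_gt 0 k with h|h
      · rw [_root_.abs_of_nonneg (by omega)]; omega
      · rw [_root_.abs_of_nonpos (by omega)]; omega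
    have : ((1:ℤ):ℝ) ≤ |((2*k+1 : ℤ):ℝ)| := by rw [← Int.cast_abs]; exact_mod_cast h5
    push_cast at this ⊢; linarith
  have hpi : (2:ℝ) < Real.pi := by
    have := Real.pi_gt_three; linarith
  nlinarith [Real.pi_pos, hw, habs.symm.le]

lemma one_add_tanh_ne_zero {w : ℂ} (hw : ‖w‖ < 1) : 1 + Complex.tanh w ≠ 0 := by
  have hc := cosh_ne_zero_of_abs_lt_one hw
  rw [Complex.tanh_eq_sinh_div_cosh]
  intro h
  have : Complex.cosh w + Complex.sinh w = 0 := by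
    field_simp at h
    simpa using h
  rw [Complex.cosh_add_sinh] at this
  exact Complex.exp_ne_zero w this

lemma psqrt_sq {w : ℂ} (hw : w ≠ 0) : (psqrt w) ^ 2 = w := by
  rw [psqrt, ← Complex.exp_nat_mul]
  rw [show (2:ℕ) * ((1/2 : ℂ) * Complex.log w) = Complex.log w by push_cast; ring]
  exact Complex.exp_log hw

theorem BTB_Gamma_diff_upper (f : ℂ → ℂ) (hf : IsBTB f) :
    ‖-(1/2) * (tCoeff f 3 - (3/2) * (tCoeff f 2)^2)‖
      - ‖-(tCoeff f 2) / 2‖ ≤ 1/12 := by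
  obtain ⟨hfa, hf0, hf'0, hinj, ω, hωa, hω0, hωb, heq⟩ := hf
  have h0 : (0:ℂ) ∈ ball (0:ℂ) 1 := mem_ball_self one_pos
  have hmem : ball (0:ℂ) 1 ∈ nhds (0:ℂ) := isOpen_ball.mem_nhds h0
  set c1 := deriv ω 0 with hc1def
  set w2 := deriv (deriv ω) 0 with hw2def
  set b2 := deriv (deriv f) 0 with hb2def
  set b3 := deriv (deriv (deriv f)) 0 with hb3def
  -- coefficient bounds
  have hc1 : ‖c1‖ ≤ 1 := by
    have := coeff_bound hωa hωb 1
    simpa [iteratedDeriv_one] using this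
  have hw2 : ‖w2‖ ≤ 2 := by
    have := coeff_bound hωa hωb 2
    rw [iteratedDeriv_succ, iteratedDeriv_one] at this
    norm_num at this
    exact this
  -- analyticity
  have hf' : AnalyticOnNhd ℂ (deriv f) (ball 0 1) := hfa.deriv
  have hω' : AnalyticOnNhd ℂ (deriv ω) (ball 0 1) := hωa.deriv
  set v : ℂ → ℂ := fun z => (deriv f z)^2 - 1 with hv
  have hva : AnalyticOnNhd ℂ v (ball 0 1) :=
    fun z hz => ((hf' z hz).pow 2).sub analyticAt_const
  have hv' : AnalyticOnNhd ℂ (deriv v) (ball 0 1) := hva.deriv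
  have hv0 : v 0 = 0 := by simp [hv, hf'0]
  -- the key identity
  have hid : ∀ z ∈ ball (0:ℂ) 1, v z * Complex.cosh (ω z) = Complex.sinh (ω z) := by
    intro z hz
    have hc := cosh_ne_zero_of_abs_lt_one (hωb z hz)
    have h1 : v z = Complex.tanh (ω z) := by
      simp only [hv]
      rw [heq z hz, psqrt_sq (one_add_tanh_ne_zero (hωb z hz))]
      ring
    rw [h1, Complex.tanh_eq_sinh_div_cosh, div_mul_cancel₀ _ hc]
  have hLR : (fun z => v z * Complex.cosh (ω z)) =ᶠ[nhds (0:ℂ)]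
      (fun z => Complex.sinh (ω z)) := Filter.eventuallyEq_of_mem hmem hid
  -- first/second derivative formulas on the ball
  have derivL : ∀ z ∈ ball (0:ℂ) 1, deriv (fun z => v z * Complex.cosh (ω z)) z
      = deriv v z * Complex.cosh (ω z) + v z * (Complex.sinh (ω z) * deriv ω z) := by
    intro z hz
    exact ((hva z hz).differentiableAt.hasDerivAt.mul
      ((hωa z hz).differentiableAt.hasDerivAt.ccosh)).deriv
  have derivR : ∀ z ∈ ball (0:ℂ) 1, deriv (fun z => Complex.sinh (ω z)) z
      = Complex.cosh (ω z) * deriv ω z := by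
    intro z hz
    exact ((hωa z hz).differentiableAt.hasDerivAt.csinh).deriv
  -- first derivative at 0
  have e1 : deriv v 0 = c1 := by
    have h1 := hLR.deriv_eq
    rw [derivL 0 h0, derivR 0 h0, hω0, hv0] at h1
    simpa using h1
  -- second derivative at 0
  have e2 : deriv (deriv v) 0 = w2 := by
    have hdd := hLR.deriv.deriv_eq
    -- LHS
    have hL2 : deriv (deriv (fun z => v z * Complex.cosh (ω z))) 0
        = deriv (deriv v) 0 := by
      have hev : deriv (fun z => v z * Complex.cosh (ω z)) =ᶠ[nhds (0:ℂ)]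
          (fun z => deriv v z * Complex.cosh (ω z) + v z * (Complex.sinh (ω z) * deriv ω z)) :=
        Filter.eventuallyEq_of_mem hmem derivL
      rw [hev.deriv_eq]
      have hA : HasDerivAt (fun z => deriv v z * Complex.cosh (ω z))
          (deriv (deriv v) 0 * Complex.cosh (ω 0) + deriv v 0 * (Complex.sinh (ω 0) * c1)) 0 :=
        (hv' 0 h0).differentiableAt.hasDerivAt.mul
          ((hωa 0 h0).differentiableAt.hasDerivAt.ccosh)
      have hBin : HasDerivAt (fun z => Complex.sinh (ω z) * deriv ω z)
          (Complex.cosh (ω 0) * c1 * deriv ω 0 + Complex.sinh (ω 0) * deriv (deriv ω) 0) 0 :=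
        ((hωa 0 h0).differentiableAt.hasDerivAt.csinh).mul
          (hω' 0 h0).differentiableAt.hasDerivAt
      have hB : HasDerivAt (fun z => v z * (Complex.sinh (ω z) * deriv ω z))
          (deriv v 0 * (Complex.sinh (ω 0) * deriv ω 0)
            + v 0 * (Complex.cosh (ω 0) * c1 * deriv ω 0 + Complex.sinh (ω 0) * deriv (deriv ω) 0)) 0 :=
        (hva 0 h0).differentiableAt.hasDerivAt.mul hBin
      rw [show deriv (fun z => deriv v z * Complex.cosh (ω z) + v z * (Complex.sinh (ω z) * deriv ω z)) 0 = _ from (hA.add hB).deriv]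
      rw [hω0, hv0]
      simp
    have hR2 : deriv (deriv (fun z => Complex.sinh (ω z))) 0 = w2 := by
      have hev : deriv (fun z => Complex.sinh (ω z)) =ᶠ[nhds (0:ℂ)]
          (fun z => Complex.cosh (ω z) * deriv ω z) :=
        Filter.eventuallyEq_of_mem hmem derivR
      rw [hev.deriv_eq]
      have hH : HasDerivAt (fun z => Complex.cosh (ω z) * deriv ω z)
          (Complex.sinh (ω 0) * c1 * deriv ω 0 + Complex.cosh (ω 0) * deriv (deriv ω) 0) 0 :=
        ((hωa 0 h0).differentiableAt.hasDerivAt.ccosh).mul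
          (hω' 0 h0).differentiableAt.hasDerivAt
      rw [hH.deriv, hω0]
      simpa using hw2def.symm
    rw [hL2, hR2] at hdd
    exact hdd
  -- express deriv v via f
  have derivv : ∀ z ∈ ball (0:ℂ) 1, deriv v z = 2 * deriv f z * deriv (deriv f) z := by
    intro z hz
    have h1 : HasDerivAt (fun z => (deriv f z)^2 - 1)
        ((2:ℕ) * (deriv f z)^(2-1) * deriv (deriv f) z) z :=
      ((hf' z hz).differentiableAt.hasDerivAt.pow 2).sub_const 1
    rw [hv, h1.deriv]
    push_cast
    ring
  have dv0 : deriv v 0 = 2 * b2 := by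
    rw [derivv 0 h0, hf'0]
    ring
  have ddv : deriv (deriv v) 0 = 2 * b2^2 + 2 * b3 := by
    have hev : deriv v =ᶠ[nhds (0:ℂ)] (fun z => 2 * deriv f z * deriv (deriv f) z) :=
      Filter.eventuallyEq_of_mem hmem derivv
    rw [hev.deriv_eq]
    have hf'' : AnalyticOnNhd ℂ (deriv (deriv f)) (ball 0 1) := hf'.deriv
    have hK : HasDerivAt (fun z => 2 * deriv f z * deriv (deriv f) z)
        ((2 * b2) * deriv (deriv f) 0 + 2 * deriv f 0 * deriv (deriv (deriv f)) 0) 0 := by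
      have h1 : HasDerivAt (fun z => 2 * deriv f z) (2 * b2) 0 :=
        (hf' 0 h0).differentiableAt.hasDerivAt.const_mul 2
      exact h1.mul (hf'' 0 h0).differentiableAt.hasDerivAt
    rw [hK.deriv, hf'0]
    ring
  -- assemble coefficient relations
  have r1 : 2 * b2 = c1 := by rw [← dv0, e1]
  have r2 : 2 * b2^2 + 2 * b3 = w2 := by rw [← ddv, e2]
  have hb2 : b2 = c1 / 2 := by linear_combination r1 / 2
  have hb3 : b3 = w2/2 - c1^2/4 := by
    rw [hb2] at r2
    linear_combination r2/2
  have tC2 : tCoeff f 2 = c1 / 4 := by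
    rw [tCoeff]
    rw [show iteratedDeriv 2 f = deriv (deriv f) by
      rw [iteratedDeriv_succ, iteratedDeriv_one]]
    rw [← hb2def, hb2]
    norm_num [Nat.factorial]
    ring
  have tC3 : tCoeff f 3 = w2/12 - c1^2/24 := by
    rw [tCoeff]
    rw [show iteratedDeriv 3 f = deriv (deriv (deriv f)) by
      rw [iteratedDeriv_succ, iteratedDeriv_succ, iteratedDeriv_one]]
    rw [← hb3def, hb3]
    norm_num [Nat.factorial]
    ring
  -- final numeric inequality
  have key : -(1/2 : ℂ) * (tCoeff f 3 - (3/2) * (tCoeff f 2)^2)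
      = -w2/24 + (13/192) * c1^2 := by
    rw [tC2, tC3]; ring
  rw [key, tC2]
  have habs1 : ‖-w2/24 + (13/192) * c1^2‖
      ≤ ‖w2‖ / 24 + (13/192) * (‖c1‖)^2 := by
    refine (norm_add_le _ _).trans ?_
    rw [norm_div, norm_neg, norm_mul, norm_pow]
    have h24 : ‖(24:ℂ)‖ = 24 := by norm_num [Complex.norm_ofNat]
    have h13 : ‖(13:ℂ)/192‖ = 13/192 := by
      rw [norm_div]
      norm_num [Complex.norm_ofNat]
    rw [h24, h13]
  have habs2 : ‖-(c1/4) / 2‖ = ‖c1‖ / 8 := by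
    rw [norm_div, norm_neg, norm_div]
    norm_num [Complex.norm_ofNat]
    ring
  rw [habs2]
  have h0c : 0 ≤ ‖c1‖ := norm_nonneg _
  nlinarith [habs1, hc1, hw2, h0c]
end

section
/- The function f_2 defined on the unit disk by f_2(z) = ∫₀^z (1 + tanh(t²))^{1/2} dt belongs to the class BT_B, and its second logarithmic coefficient γ_2 = (1/2)(a_3 − a_2²/2) satisfies |γ_2| = 1/12 (its Taylor coefficients satisfy a_2 = 0 and a_3 = 1/6). Hence the bound |γ_2| ≤ 1/12 for the class BT_B is sharp. -/
open Complex Metric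

noncomputable def f₂ (z : ℂ) : ℂ :=
  ∫ t in (0:ℝ)..1, z * psqrt (1 + Complex.tanh (((t : ℂ) * z)^2))


noncomputable def gB (z : ℂ) : ℂ := psqrt (1 + Complex.tanh (z ^ 2))

noncomputable def gB' (z : ℂ) : ℂ :=
  gB z * ((1/2 : ℂ) * ((1 + Complex.tanh (z^2))⁻¹ *
    ((1 - Complex.tanh (z^2)^2) * (2*z))))

lemma coshRe (z : ℂ) : (Complex.cosh z).re = Real.cosh z.re * Real.cos z.im := by
  rw [Complex.cosh, Real.cosh_eq]
  simp [Complex.div_re, Complex.exp_re, Complex.normSq_apply]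
  ring

lemma coshIm (z : ℂ) : (Complex.cosh z).im = Real.sinh z.re * Real.sin z.im := by
  rw [Complex.cosh, Real.sinh_eq]
  simp [Complex.div_im, Complex.exp_im, Complex.normSq_apply]
  ring

lemma cosh_ne_zero' {z : ℂ} (h : |z.im| < 1) : Complex.cosh z ≠ 0 := by
  intro h0
  have h1 : (Complex.cosh z).re = 0 := by rw [h0]; simp
  rw [coshRe] at h1
  have hlt := abs_lt.mp h
  have : Real.cos z.im > 0 := Real.cos_pos_of_mem_Ioo
    ⟨by nlinarith [Real.pi_gt_three], by nlinarith [Real.pi_gt_three]⟩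
  nlinarith [Real.cosh_pos z.re]

lemma one_add_tanh_eq {z : ℂ} (h : Complex.cosh z ≠ 0) :
    1 + Complex.tanh z = Complex.exp z / Complex.cosh z := by
  rw [Complex.tanh_eq_sinh_div_cosh, ← Complex.cosh_add_sinh]
  field_simp

lemma one_add_tanh_mem_slitPlane {z : ℂ} (hz : ‖z‖ < 1) :
    1 + Complex.tanh z ∈ Complex.slitPlane := by
  have him : |z.im| < 1 := lt_of_le_of_lt (Complex.abs_im_le_norm z) hz
  have hc : Complex.cosh z ≠ 0 := cosh_ne_zero' him
  have hN : 0 < Complex.normSq (Complex.cosh z) := Complex.normSq_pos.mpr hc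
  rw [one_add_tanh_eq hc, Complex.mem_slitPlane_iff]
  have hlt := abs_lt.mp him
  by_cases hy : z.im = 0
  · left
    rw [Complex.div_re, coshRe, coshIm, Complex.exp_re, Complex.exp_im, hy]
    simp only [Real.cos_zero, Real.sin_zero, mul_one, mul_zero, zero_mul, add_zero]
    positivity
  · right
    have key : (Complex.exp z / Complex.cosh z).im
        = (Real.sin z.im * Real.cos z.im) / Complex.normSq (Complex.cosh z) := by
      rw [Complex.div_im, coshRe, coshIm, Complex.exp_re, Complex.exp_im, div_sub_div_same]
      congr 1
      have h1 : Real.cosh z.re - Real.sinh z.re = Real.exp (-z.re) := Real.cosh_sub_sinh z.re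
      have h2 : Real.exp z.re * Real.exp (-z.re) = 1 := by
        rw [← Real.exp_add]; simp
      linear_combination Real.sin z.im * Real.cos z.im * Real.exp z.re * h1 +
        Real.sin z.im * Real.cos z.im * h2
    rw [key]
    have hs : Real.sin z.im ≠ 0 := by
      intro h0
      exact hy ((Real.sin_eq_zero_iff_of_lt_of_lt (by nlinarith [Real.pi_gt_three])
        (by nlinarith [Real.pi_gt_three])).mp h0)
    have hcos : 0 < Real.cos z.im := Real.cos_pos_of_mem_Ioo
      ⟨by nlinarith [Real.pi_gt_three], by nlinarith [Real.pi_gt_three]⟩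
    positivity

lemma sq_mem {z : ℂ} (hz : z ∈ ball (0:ℂ) 1) : ‖z^2‖ < 1 := by
  rw [mem_ball_zero_iff] at hz
  rw [norm_pow]
  nlinarith [norm_nonneg z]

lemma slit' {z : ℂ} (hz : z ∈ ball (0:ℂ) 1) :
    1 + Complex.tanh (z^2) ∈ Complex.slitPlane :=
  one_add_tanh_mem_slitPlane (sq_mem hz)

lemma w_ne_zero {z : ℂ} (hz : z ∈ ball (0:ℂ) 1) : 1 + Complex.tanh (z^2) ≠ 0 :=
  Complex.slitPlane_ne_zero (slit' hz)

lemma cosh_sq_ne {z : ℂ} (hz : z ∈ ball (0:ℂ) 1) : Complex.cosh (z^2) ≠ 0 :=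
  cosh_ne_zero' (lt_of_le_of_lt (Complex.abs_im_le_norm _) (sq_mem hz))

lemma hasDerivAt_tanh_sq {z : ℂ} (hz : z ∈ ball (0:ℂ) 1) :
    HasDerivAt (fun z => Complex.tanh (z^2)) ((1 - Complex.tanh (z^2)^2) * (2*z)) z := by
  have hc := cosh_sq_ne hz
  have hp : HasDerivAt (fun w : ℂ => w^2) (2*z) z := by
    simpa using hasDerivAt_pow 2 z
  have hs : HasDerivAt (fun z : ℂ => Complex.sinh (z^2)) (Complex.cosh (z^2) * (2*z)) z := by
    exact (Complex.hasDerivAt_sinh (z^2)).comp z hp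
  have hcc : HasDerivAt (fun z : ℂ => Complex.cosh (z^2)) (Complex.sinh (z^2) * (2*z)) z := by
    exact (Complex.hasDerivAt_cosh (z^2)).comp z hp
  have hdiv := hs.div hcc hc
  have hfun : (fun z : ℂ => Complex.tanh (z^2))
      = fun z : ℂ => Complex.sinh (z^2) / Complex.cosh (z^2) :=
    funext fun w => Complex.tanh_eq_sinh_div_cosh _
  rw [hfun]
  refine hdiv.congr_deriv ?_
  symm
  rw [Complex.tanh_eq_sinh_div_cosh]
  have h1 : Complex.cosh (z^2) ^ 2 - Complex.sinh (z^2) ^ 2 = 1 :=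
    Complex.cosh_sq_sub_sinh_sq (z^2)
  field_simp

lemma hasDerivAt_gB {z : ℂ} (hz : z ∈ ball (0:ℂ) 1) : HasDerivAt gB (gB' z) z := by
  have hw : HasDerivAt (fun z : ℂ => 1 + Complex.tanh (z^2))
      ((1 - Complex.tanh (z^2)^2) * (2*z)) z := (hasDerivAt_tanh_sq hz).const_add 1
  have hlog : HasDerivAt (fun z : ℂ => Complex.log (1 + Complex.tanh (z^2)))
      ((1 + Complex.tanh (z^2))⁻¹ * ((1 - Complex.tanh (z^2)^2) * (2*z))) z := by
    exact (Complex.hasDerivAt_log (slit' hz)).comp z hw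
  have hmul := hlog.const_mul ((1:ℂ)/2)
  have hexp := (Complex.hasDerivAt_exp ((1/2 : ℂ) *
      Complex.log (1 + Complex.tanh (z^2)))).comp z hmul
  unfold gB' gB psqrt
  simpa [Function.comp_def] using hexp

lemma cont_tanh_sq : ContinuousOn (fun z : ℂ => Complex.tanh (z^2)) (ball (0:ℂ) 1) :=
  fun z hz => (hasDerivAt_tanh_sq hz).differentiableAt.continuousAt.continuousWithinAt

lemma cont_gB : ContinuousOn gB (ball (0:ℂ) 1) :=
  fun z hz => (hasDerivAt_gB hz).differentiableAt.continuousAt.continuousWithinAt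

lemma cont_gB' : ContinuousOn gB' (ball (0:ℂ) 1) := by
  apply cont_gB.mul
  apply continuousOn_const.mul
  apply ContinuousOn.mul
  · exact ((continuousOn_const.add cont_tanh_sq).inv₀ fun z hz => w_ne_zero hz)
  · exact (continuousOn_const.sub (cont_tanh_sq.pow 2)).mul
      (continuousOn_const.mul continuousOn_id)


lemma tmul_mem {x : ℂ} {t : ℝ} (hx : ‖x‖ < 1) (h0 : 0 ≤ t) (h1 : t ≤ 1) :
    (t : ℂ) * x ∈ ball (0:ℂ) 1 := by
  rw [mem_ball_zero_iff, norm_mul, Complex.norm_real, Real.norm_eq_abs,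
    _root_.abs_of_nonneg h0]
  nlinarith [norm_nonneg x]

lemma hasDerivAt_f₂ {x₀ : ℂ} (hx₀ : x₀ ∈ ball (0:ℂ) 1) : HasDerivAt f₂ (gB x₀) x₀ := by
  rw [mem_ball_zero_iff] at hx₀
  set r : ℝ := (‖x₀‖ + 1) / 2 with hr
  have habs0 := norm_nonneg x₀
  have hr1 : r < 1 := by rw [hr]; linarith
  have hx₀r : ‖x₀‖ < r := by rw [hr]; linarith
  have hrpos : 0 < r := by rw [hr]; linarith
  set ε : ℝ := r - ‖x₀‖ with hε
  have hεpos : 0 < ε := by rw [hε]; linarith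
  -- membership facts
  have hmem : ∀ x : ℂ, x ∈ ball x₀ ε → ‖x‖ < r := by
    intro x hx
    have := mem_ball_iff_norm.mp hx
    calc ‖x‖ = ‖x₀ + (x - x₀)‖ := by congr 1; ring
      _ ≤ ‖x₀‖ + ‖x - x₀‖ := norm_add_le _ _
      _ < ‖x₀‖ + ε := by linarith
      _ = r := by rw [hε]; ring
  have hball : ∀ {x : ℂ}, ‖x‖ < 1 → x ∈ ball (0:ℂ) 1 := by
    intro x hx; rwa [mem_ball_zero_iff]
  -- bounds on the compact set
  obtain ⟨C₁, hC₁⟩ := (isCompact_closedBall (0:ℂ) r).exists_bound_of_continuousOn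
    (cont_gB.mono (fun w hw => hball (lt_of_le_of_lt (mem_closedBall_zero_iff.mp hw) hr1)))
  obtain ⟨C₂, hC₂⟩ := (isCompact_closedBall (0:ℂ) r).exists_bound_of_continuousOn
    (cont_gB'.mono (fun w hw => hball (lt_of_le_of_lt (mem_closedBall_zero_iff.mp hw) hr1)))
  have hC₂0 : 0 ≤ C₂ := le_trans (norm_nonneg _) (hC₂ 0 (mem_closedBall_self hrpos.le))
  have hKmem : ∀ {x : ℂ} {t : ℝ}, ‖x‖ < r → 0 ≤ t → t ≤ 1 →
      (↑t * x ∈ ball (0:ℂ) 1 ∧ ↑t * x ∈ closedBall (0:ℂ) r) := by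
    intro x t hx h0 h1
    have habs : ‖(t:ℂ) * x‖ ≤ ‖x‖ := by
      rw [norm_mul, Complex.norm_real, Real.norm_eq_abs, _root_.abs_of_nonneg h0]
      nlinarith [norm_nonneg x]
    constructor
    · exact hball (lt_of_le_of_lt habs (lt_trans hx hr1))
    · rw [mem_closedBall_zero_iff]
      exact le_trans habs (le_of_lt hx)
  -- the parametric family
  set F : ℂ → ℝ → ℂ := fun x t => x * gB ((t:ℂ) * x) with hF
  set F' : ℂ → ℝ → ℂ := fun x t => gB ((t:ℂ) * x) + x * (gB' ((t:ℂ) * x) * (t:ℂ)) with hF'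
  have hcontF : ∀ x : ℂ, ‖x‖ < r → ContinuousOn (F x) (Set.Icc (0:ℝ) 1) := by
    intro x hx
    apply continuousOn_const.mul
    apply cont_gB.comp ((Complex.continuous_ofReal.mul continuous_const).continuousOn)
    intro t ht
    exact (hKmem hx ht.1 ht.2).1
  have hcontF' : ContinuousOn (F' x₀) (Set.Icc (0:ℝ) 1) := by
    apply ContinuousOn.add
    · apply cont_gB.comp ((Complex.continuous_ofReal.mul continuous_const).continuousOn)
      intro t ht; exact (hKmem hx₀r ht.1 ht.2).1
    · apply continuousOn_const.mul
      apply ContinuousOn.mul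
      · apply cont_gB'.comp ((Complex.continuous_ofReal.mul continuous_const).continuousOn)
        intro t ht; exact (hKmem hx₀r ht.1 ht.2).1
      · exact Complex.continuous_ofReal.continuousOn
    
  have huIoc : Set.uIoc (0:ℝ) 1 ⊆ Set.Icc (0:ℝ) 1 := by
    rw [Set.uIoc_of_le (by norm_num : (0:ℝ) ≤ 1)]
    exact Set.Ioc_subset_Icc_self
  have key := intervalIntegral.hasDerivAt_integral_of_dominated_loc_of_deriv_le
    (F := F) (F' := F') (x₀ := x₀) (a := 0) (b := 1) (μ := MeasureTheory.volume)
    (bound := fun _ => C₁ + C₂) (ball_mem_nhds x₀ hεpos)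
    ?_ ?_ ?_ ?_ ?_ ?_
  · -- conclude
    have heq : (∫ t in (0:ℝ)..1, F' x₀ t) = gB x₀ := by
      have hFTC := intervalIntegral.integral_eq_sub_of_hasDerivAt
        (f := fun t : ℝ => (t:ℂ) * gB ((t:ℂ) * x₀)) (f' := F' x₀)
        (a := 0) (b := 1) ?_ ?_
      · rw [hFTC]; push_cast; simp
      · intro t ht
        rw [Set.uIcc_of_le (by norm_num : (0:ℝ) ≤ 1)] at ht
        have hmem' := (hKmem hx₀r ht.1 ht.2).1
        have hΦ : HasDerivAt (fun w : ℂ => w * gB (w * x₀))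
            (1 * gB ((t:ℂ) * x₀) + (t:ℂ) * (gB' ((t:ℂ) * x₀) * x₀)) ((t:ℂ)) := by
          apply HasDerivAt.mul (hasDerivAt_id _)
          have hin : HasDerivAt (fun w : ℂ => w * x₀) x₀ ((t:ℂ)) := by
            simpa using (hasDerivAt_id ((t:ℂ))).mul_const x₀
          simpa [Function.comp_def] using (hasDerivAt_gB hmem').comp ((t:ℂ)) hin
        have := hΦ.comp_ofReal
        refine this.congr_deriv ?_
        symm
        simp only [hF']
        ring
      · exact (hcontF'.mono (by rw [Set.uIcc_of_le (by norm_num : (0:ℝ) ≤ 1)])).intervalIntegrable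
    rw [heq] at key
    exact key.2
  · -- hF_meas
    filter_upwards [ball_mem_nhds x₀ hεpos] with x hx
    exact ((hcontF x (hmem x hx)).mono huIoc).aestronglyMeasurable measurableSet_uIoc
  · -- hF_int
    exact ((hcontF x₀ hx₀r).mono (by rw [Set.uIcc_of_le (by norm_num : (0:ℝ) ≤ 1)])).intervalIntegrable
  · -- hF'_meas
    exact (hcontF'.mono huIoc).aestronglyMeasurable measurableSet_uIoc
  · -- h_bound
    apply Filter.Eventually.of_forall
    intro t ht x hx
    have ht' := huIoc ht
    have hxr := hmem x hx
    have h1 := hC₁ _ (hKmem hxr ht'.1 ht'.2).2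
    have h2 := hC₂ _ (hKmem hxr ht'.1 ht'.2).2
    simp only [hF']
    calc ‖gB ((t:ℂ) * x) + x * (gB' ((t:ℂ) * x) * (t:ℂ))‖
        ≤ ‖gB ((t:ℂ) * x)‖ + ‖x * (gB' ((t:ℂ) * x) * (t:ℂ))‖ := norm_add_le _ _
      _ ≤ C₁ + C₂ := by
          apply add_le_add h1
          rw [norm_mul, norm_mul, Complex.norm_real, Real.norm_eq_abs, _root_.abs_of_nonneg ht'.1]
          have hx1 : ‖x‖ ≤ 1 := by
            exact le_of_lt (lt_trans hxr hr1)
          have hb := norm_nonneg (gB' ((t:ℂ) * x))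
          have e1 : ‖gB' ((t:ℂ) * x)‖ * t ≤ C₂ * 1 := mul_le_mul h2 ht'.2 ht'.1 hC₂0
          have e2 : ‖x‖ * (‖gB' ((t:ℂ) * x)‖ * t) ≤ 1 * (C₂ * 1) :=
            mul_le_mul hx1 e1 (mul_nonneg hb ht'.1) zero_le_one
          linarith
  · -- bound integrable
    exact intervalIntegrable_const
  · -- h_diff
    apply Filter.Eventually.of_forall
    intro t ht x hx
    have ht' := huIoc ht
    have hxr := hmem x hx
    have hmem' := (hKmem hxr ht'.1 ht'.2).1
    have hin : HasDerivAt (fun x : ℂ => (t:ℂ) * x) ((t:ℂ)) x := by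
      simpa using (hasDerivAt_id x).const_mul ((t:ℂ))
    have hcomp : HasDerivAt (fun x : ℂ => gB ((t:ℂ) * x)) (gB' ((t:ℂ) * x) * (t:ℂ)) x := by
      simpa [Function.comp_def] using (hasDerivAt_gB hmem').comp x hin
    have := (hasDerivAt_id x).mul hcomp
    simpa [hF, hF', Pi.mul_def] using this

lemma re_gB_pos {z : ℂ} (hz : z ∈ ball (0:ℂ) 1) : 0 < (gB z).re := by
  have hslit := slit' hz
  have hne := w_ne_zero hz
  set w := 1 + Complex.tanh (z^2) with hw
  have : gB z = Complex.exp ((1/2 : ℂ) * Complex.log w) := rfl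
  rw [this, Complex.exp_re]
  apply mul_pos (Real.exp_pos _)
  have him : ((1/2 : ℂ) * Complex.log w).im = w.arg / 2 := by
    simp [Complex.mul_im, Complex.log_im]
    ring
  rw [him]
  apply Real.cos_pos_of_mem_Ioo
  constructor
  · have := Complex.neg_pi_lt_arg w
    linarith
  · have h1 := Complex.arg_le_pi w
    have h2 := Complex.slitPlane_arg_ne_pi hslit
    have : w.arg < Real.pi := lt_of_le_of_ne h1 h2
    linarith

lemma segment_mem {a b : ℂ} (ha : a ∈ ball (0:ℂ) 1) (hb : b ∈ ball (0:ℂ) 1)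
    {t : ℝ} (h0 : 0 ≤ t) (h1 : t ≤ 1) : a + (t:ℂ) * (b - a) ∈ ball (0:ℂ) 1 := by
  rw [mem_ball_zero_iff] at *
  have key : a + (t:ℂ) * (b - a) = ((1 - t : ℝ) : ℂ) * a + (t:ℂ) * b := by
    push_cast; ring
  rw [key]
  calc ‖((1 - t : ℝ) : ℂ) * a + (t:ℂ) * b‖
      ≤ ‖((1 - t : ℝ) : ℂ) * a‖ + ‖(t:ℂ) * b‖ :=
        norm_add_le _ _
    _ = (1 - t) * ‖a‖ + t * ‖b‖ := by
        rw [norm_mul, norm_mul, Complex.norm_real, Complex.norm_real, Real.norm_eq_abs, Real.norm_eq_abs,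
          _root_.abs_of_nonneg h0, _root_.abs_of_nonneg (by linarith : (0:ℝ) ≤ 1 - t)]
    _ < 1 := by
        rcases eq_or_lt_of_le h0 with h | h
        · rw [← h]; simpa using ha
        · nlinarith [mul_pos h (by linarith : (0:ℝ) < 1 - ‖b‖),
            mul_nonneg (by linarith : (0:ℝ) ≤ 1 - t)
              (by linarith : (0:ℝ) ≤ 1 - ‖a‖)]

lemma f₂_injOn : Set.InjOn f₂ (ball (0:ℂ) 1) := by
  intro a ha b hb hab
  by_contra hne
  have hba : b - a ≠ 0 := sub_ne_zero.mpr (fun h => hne h.symm)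
  set γ : ℝ → ℂ := fun t => a + (t:ℂ) * (b - a) with hγ
  have hγmem : ∀ t : ℝ, 0 ≤ t → t ≤ 1 → γ t ∈ ball (0:ℂ) 1 :=
    fun t h0 h1 => segment_mem ha hb h0 h1
  have hd : ∀ t ∈ Set.uIcc (0:ℝ) 1,
      HasDerivAt (fun s : ℝ => f₂ (γ s)) ((b - a) * gB (γ t)) t := by
    intro t ht
    rw [Set.uIcc_of_le (by norm_num : (0:ℝ) ≤ 1)] at ht
    have hΦ : HasDerivAt (fun w : ℂ => f₂ (a + w * (b - a))) (gB (γ t) * (b - a)) ((t:ℂ)) := by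
      have hin : HasDerivAt (fun w : ℂ => a + w * (b - a)) (b - a) ((t:ℂ)) := by
        simpa using ((hasDerivAt_id ((t:ℂ))).mul_const (b - a)).const_add a
      simpa [Function.comp_def] using
        (hasDerivAt_f₂ (hγmem t ht.1 ht.2)).comp ((t:ℂ)) hin
    have := hΦ.comp_ofReal
    convert this using 1
    ring
  have hcont : ContinuousOn (fun t : ℝ => (b - a) * gB (γ t)) (Set.uIcc (0:ℝ) 1) := by
    rw [Set.uIcc_of_le (by norm_num : (0:ℝ) ≤ 1)]
    apply continuousOn_const.mul
    apply cont_gB.comp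
    · exact (continuous_const.add (Complex.continuous_ofReal.mul continuous_const)).continuousOn
    · intro t ht; exact hγmem t ht.1 ht.2
  have hint : IntervalIntegrable (fun t : ℝ => (b - a) * gB (γ t))
      MeasureTheory.volume 0 1 := hcont.intervalIntegrable
  have hFTC := intervalIntegral.integral_eq_sub_of_hasDerivAt hd hint
  have hγ1 : γ 1 = b := by simp [hγ]
  have hγ0 : γ 0 = a := by simp [hγ]
  rw [hγ1, hγ0, ← hab, sub_self, intervalIntegral.integral_const_mul] at hFTC
  have hI : (∫ t in (0:ℝ)..1, gB (γ t)) = 0 := by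
    rcases mul_eq_zero.mp hFTC with h | h
    · exact absurd h hba
    · exact h
  have hcγ : ContinuousOn (fun t : ℝ => gB (γ t)) (Set.Icc (0:ℝ) 1) := by
    apply cont_gB.comp
    · exact (continuous_const.add (Complex.continuous_ofReal.mul continuous_const)).continuousOn
    · intro t ht; exact hγmem t ht.1 ht.2
  have hintg : IntervalIntegrable (fun t : ℝ => gB (γ t)) MeasureTheory.volume 0 1 := by
    apply ContinuousOn.intervalIntegrable
    rwa [Set.uIcc_of_le (by norm_num : (0:ℝ) ≤ 1)]
  have hre : (∫ t in (0:ℝ)..1, (gB (γ t)).re) = 0 := by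
    have := Complex.reCLM.intervalIntegral_comp_comm hintg
    simp only [Complex.reCLM_apply] at this
    rw [this, hI]
    simp
  have hpos : 0 < ∫ t in (0:ℝ)..1, (gB (γ t)).re := by
    apply intervalIntegral.intervalIntegral_pos_of_pos_on
    · apply ContinuousOn.intervalIntegrable
      rw [Set.uIcc_of_le (by norm_num : (0:ℝ) ≤ 1)]
      exact Complex.continuous_re.comp_continuousOn hcγ
    · intro t ht
      exact re_gB_pos (hγmem t ht.1.le ht.2.le)
    · norm_num
  rw [hre] at hpos
  exact lt_irrefl 0 hpos

noncomputable def uB (z : ℂ) : ℂ :=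
  gB z * ((1 - Complex.tanh (z^2)^2) * (1 + Complex.tanh (z^2))⁻¹)

lemma gB'_eq (z : ℂ) : gB' z = z * uB z := by
  simp only [gB', uB]; ring


theorem BTB_gamma2_sharp :
    IsBTB f₂ ∧ tCoeff f₂ 2 = 0 ∧ tCoeff f₂ 3 = 1/6 ∧
      ‖(1/2) * (tCoeff f₂ 3 - (tCoeff f₂ 2)^2 / 2)‖ = 1/12 := by
  have h0 : (0:ℂ) ∈ ball (0:ℂ) 1 := mem_ball_self one_pos
  have hderiv : ∀ z ∈ ball (0:ℂ) 1, deriv f₂ z = gB z :=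
    fun z hz => (hasDerivAt_f₂ hz).deriv
  have e1 : deriv f₂ =ᶠ[nhds (0:ℂ)] gB :=
    Filter.eventuallyEq_of_mem (ball_mem_nhds _ one_pos) hderiv
  have hgB0 : gB 0 = 1 := by simp [gB, psqrt]
  have hgB'0 : gB' 0 = 0 := by simp [gB']
  have hu0 : uB 0 = 1 := by simp [uB, gB, psqrt]
  have hderivgB : deriv gB =ᶠ[nhds (0:ℂ)] fun z => z * uB z :=
    Filter.eventuallyEq_of_mem (ball_mem_nhds _ one_pos)
      (fun z hz => ((hasDerivAt_gB hz).deriv).trans (gB'_eq z))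
  have h1 : DifferentiableAt ℂ (fun z : ℂ => Complex.tanh (z^2)) 0 :=
    (hasDerivAt_tanh_sq h0).differentiableAt
  have hu : DifferentiableAt ℂ uB 0 := by
    apply DifferentiableAt.mul (hasDerivAt_gB h0).differentiableAt
    apply DifferentiableAt.mul
    · exact (differentiableAt_const _).sub (h1.pow 2)
    · exact ((differentiableAt_const _).add h1).inv (by simp)
  have hzu : deriv (fun z : ℂ => z * uB z) 0 = uB 0 := by
    have := ((hasDerivAt_id (0:ℂ)).mul hu.hasDerivAt).deriv
    simpa [Pi.mul_def] using this
  have key2 : iteratedDeriv 2 f₂ 0 = 0 := by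
    have h2 : iteratedDeriv 2 f₂ = deriv (deriv f₂) := by
      rw [show (2:ℕ) = 1 + 1 from rfl, iteratedDeriv_succ, iteratedDeriv_one]
    rw [h2, e1.deriv_eq, (hasDerivAt_gB h0).deriv, hgB'0]
  have key3 : iteratedDeriv 3 f₂ 0 = 1 := by
    have h3 : iteratedDeriv 3 f₂ = deriv (deriv (deriv f₂)) := by
      rw [show (3:ℕ) = 2 + 1 from rfl, iteratedDeriv_succ,
        show (2:ℕ) = 1 + 1 from rfl, iteratedDeriv_succ, iteratedDeriv_one]
    rw [h3, (e1.deriv).deriv_eq, hderivgB.deriv_eq, hzu, hu0]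
  have ht2 : tCoeff f₂ 2 = 0 := by rw [tCoeff, key2]; simp
  have ht3 : tCoeff f₂ 3 = 1/6 := by
    rw [tCoeff, key3]
    norm_num [Nat.factorial]
  refine ⟨⟨?_, ?_, ?_, f₂_injOn, fun z => z^2, ?_, by simp, ?_, ?_⟩, ht2, ht3, ?_⟩
  · have hdf : DifferentiableOn ℂ f₂ (ball 0 1) :=
      fun z hz => ((hasDerivAt_f₂ hz).differentiableAt).differentiableWithinAt
    exact hdf.analyticOnNhd isOpen_ball
  · simp [f₂]
  · rw [hderiv 0 h0, hgB0]
  · have hdω : DifferentiableOn ℂ (fun z : ℂ => z^2) (ball 0 1) :=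
      (differentiable_pow 2).differentiableOn
    exact hdω.analyticOnNhd isOpen_ball
  · exact fun z hz => sq_mem hz
  · exact fun z hz => hderiv z hz
  · rw [ht2, ht3]
    have hv : ((1/2 : ℂ) * ((1/6:ℂ) - (0:ℂ)^2/2)) = ((1/12 : ℝ) : ℂ) := by norm_num
    rw [hv, Complex.norm_real]
    norm_num
end

section
/- The function f_3 defined on the unit disk by f_3(z) = ∫₀^z (1 + tanh(t³))^{1/2} dt belongs to the class BT_B, and its third logarithmic coefficient γ_3 = (1/2)(a_4 − a_2·a_3 + a_2³/3) satisfies |γ_3| = 1/16 (its Taylor coefficients satisfy a_2 = a_3 = 0 and a_4 = 1/8). Hence the bound |γ_3| ≤ 1/16 for the class BT_B is sharp. -/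
open Complex Metric

noncomputable def f₃ (z : ℂ) : ℂ :=
  ∫ t in (0:ℝ)..1, z * psqrt (1 + Complex.tanh (((t : ℂ) * z)^3))

noncomputable def gg (z : ℂ) : ℂ := psqrt (1 + Complex.tanh (z^3))
noncomputable def EE (z : ℂ) : ℂ := Complex.exp (-2 * z^3)
noncomputable def VV (z : ℂ) : ℂ := 1 + EE z
noncomputable def uu (z : ℂ) : ℂ := 3 * z^2 * EE z / VV z
noncomputable def uu₂ (z : ℂ) : ℂ := 6*z*EE z/VV z - 18*z^4*EE z/(VV z)^2

-- basic values
lemma EE_zero : EE 0 = 1 := by simp [EE]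
lemma VV_zero : VV 0 = 2 := by simp [VV, EE_zero]; norm_num
lemma uu_zero : uu 0 = 0 := by simp [uu]
lemma uu₂_zero : uu₂ 0 = 0 := by simp [uu₂]

lemma exp_pos_or_im_ne (w : ℂ) (h : |w.im| < Real.pi) :
    (0 < (Complex.exp w).re ∧ (Complex.exp w).im = 0) ∨ (Complex.exp w).im ≠ 0 := by
  rcases eq_or_ne (Complex.exp w).im 0 with h0 | h0
  · left
    refine ⟨?_, h0⟩
    rw [Complex.exp_im] at h0
    have hs : Real.sin w.im = 0 := by
      have := Real.exp_pos w.re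
      rcases mul_eq_zero.1 h0 with h' | h'
      · exact absurd h' (ne_of_gt this)
      · exact h'
    have him : w.im = 0 := by
      rw [Real.sin_eq_zero_iff_of_lt_of_lt (by linarith [abs_lt.1 h]) (abs_lt.1 h).2] at hs
      exact hs
    rw [Complex.exp_re, him, Real.cos_zero, mul_one]
    exact Real.exp_pos w.re
  · right; exact h0

lemma im_cube_bound (z : ℂ) (hz : ‖z‖ < 1) : |(-2 * z^3).im| < Real.pi := by
  have h1 : |(-2 * z^3).im| ≤ ‖-2 * z^3‖ := Complex.abs_im_le_norm _
  have h2 : ‖-2 * z^3‖ = 2 * (‖z‖)^3 := by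
    simp [norm_mul, norm_pow]
  have h3 : (‖z‖)^3 < 1 := pow_lt_one₀ (norm_nonneg z) hz (by norm_num)
  nlinarith [Real.pi_gt_three]

lemma EE_dichotomy (z : ℂ) (hz : ‖z‖ < 1) :
    (0 < (EE z).re ∧ (EE z).im = 0) ∨ (EE z).im ≠ 0 :=
  exp_pos_or_im_ne _ (im_cube_bound z hz)

lemma VV_ne_zero (z : ℂ) (hz : ‖z‖ < 1) : VV z ≠ 0 := by
  rcases EE_dichotomy z hz with ⟨hre, _⟩ | him
  · intro h
    have : (VV z).re = 0 := by rw [h]; simp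
    rw [VV] at this
    simp [Complex.add_re] at this
    linarith
  · intro h
    have : (VV z).im = 0 := by rw [h]; simp
    rw [VV] at this
    simp [Complex.add_im] at this
    exact him this

lemma two_div_VV_mem_slitPlane (z : ℂ) (hz : ‖z‖ < 1) :
    2 / VV z ∈ Complex.slitPlane := by
  rcases EE_dichotomy z hz with ⟨hre, him⟩ | him
  · left
    have hVre : 0 < (VV z).re := by
      rw [VV]; simp [Complex.add_re]; linarith
    have hVim : (VV z).im = 0 := by rw [VV]; simp [Complex.add_im, him]
    rw [Complex.div_re]
    have hns : 0 < Complex.normSq (VV z) := by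
      rw [Complex.normSq_pos]; exact VV_ne_zero z hz
    have : (2:ℂ).re = 2 := by norm_num
    simp [Complex.div_re, hVim]
    positivity
  · right
    have hVim : (VV z).im ≠ 0 := by rw [VV]; simpa [Complex.add_im] using him
    have hns : 0 < Complex.normSq (VV z) := by
      rw [Complex.normSq_pos]; exact VV_ne_zero z hz
    rw [Complex.div_im]
    have h2re : (2:ℂ).re = 2 := by norm_num
    have h2im : (2:ℂ).im = 0 := by norm_num
    rw [h2re, h2im]
    simp only [zero_mul, zero_div, zero_sub, neg_ne_zero]
    intro h
    have h' : 2 * (VV z).im = 0 :=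
      (div_eq_zero_iff.1 h).resolve_right fun hc =>
        VV_ne_zero z hz (Complex.normSq_eq_zero.1 hc)
    exact hVim (by linarith)

lemma VV_eq_cosh (z : ℂ) : VV z = 2 * Complex.exp (-z^3) * Complex.cosh (z^3) := by
  rw [VV, EE, Complex.cosh]
  rw [show 2 * Complex.exp (-z^3) * ((Complex.exp (z^3) + Complex.exp (-(z^3)))/2)
      = Complex.exp (-z^3 + z^3) + Complex.exp (-z^3 + -z^3) by
        rw [Complex.exp_add, Complex.exp_add]; ring]
  rw [show -z^3 + z^3 = 0 by ring, Complex.exp_zero, show -z^3 + -z^3 = -2*z^3 by ring]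

lemma cosh_ne_zero (z : ℂ) (hz : ‖z‖ < 1) : Complex.cosh (z^3) ≠ 0 := by
  intro h
  apply VV_ne_zero z hz
  rw [VV_eq_cosh, h, mul_zero]

lemma one_add_tanh_eq_s15 (z : ℂ) (hz : ‖z‖ < 1) :
    1 + Complex.tanh (z^3) = 2 / VV z := by
  have hc := cosh_ne_zero z hz
  rw [Complex.tanh_eq_sinh_div_cosh, VV_eq_cosh, Complex.exp_neg]
  have he := Complex.exp_ne_zero (z^3)
  have key : Complex.cosh (z^3) + Complex.sinh (z^3) = Complex.exp (z^3) :=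
    Complex.cosh_add_sinh (z^3)
  field_simp
  linear_combination key

lemma mem_ball_iff_abs {z : ℂ} : z ∈ ball (0:ℂ) 1 ↔ ‖z‖ < 1 := by
  simp [Metric.mem_ball, Complex.dist_eq]

lemma gg_eq (z : ℂ) (hz : ‖z‖ < 1) :
    gg z = Complex.exp ((1/2:ℂ) * Complex.log (2 / VV z)) := by
  rw [gg, psqrt, one_add_tanh_eq_s15 z hz]

lemma hasDerivAt_EE (z : ℂ) : HasDerivAt EE (-6*z^2 * EE z) z := by
  have h : HasDerivAt (fun w : ℂ => -2*w^3) (-6*z^2) z := by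
    have := (hasDerivAt_pow 3 z).const_mul (-2 : ℂ)
    refine this.congr_deriv ?_
    norm_num
    ring
  have h2 := h.cexp
  have : HasDerivAt (fun w : ℂ => Complex.exp (-2*w^3)) (Complex.exp (-2*z^3) * (-6*z^2)) z := h2
  have h3 : HasDerivAt EE (Complex.exp (-2*z^3) * (-6*z^2)) z := this
  convert h3 using 1
  rw [EE]; ring

lemma hasDerivAt_VV (z : ℂ) : HasDerivAt VV (-6*z^2 * EE z) z := by
  exact (hasDerivAt_EE z).const_add 1

lemma hasDerivAt_gg (z : ℂ) (hz : ‖z‖ < 1) :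
    HasDerivAt gg (uu z * gg z) z := by
  have hV := hasDerivAt_VV z
  have hVne := VV_ne_zero z hz
  have hq : HasDerivAt (fun w => 2 / VV w)
      ((0 * VV z - 2 * (-6*z^2 * EE z)) / (VV z)^2) z :=
    (hasDerivAt_const z (2:ℂ)).div hV hVne
  have hl := (hq.clog (two_div_VV_mem_slitPlane z hz)).const_mul (1/2 : ℂ)
  have hexp := hl.cexp
  have heq : gg =ᶠ[nhds z] fun w => Complex.exp ((1/2:ℂ) * Complex.log (2 / VV w)) := by
    refine Filter.eventuallyEq_of_mem (isOpen_ball.mem_nhds (mem_ball_iff_abs.2 hz)) ?_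
    intro w hw
    exact gg_eq w (mem_ball_iff_abs.1 hw)
  refine (hexp.congr_of_eventuallyEq heq).congr_deriv ?_
  rw [gg_eq z hz, uu]
  field_simp
  ring

lemma hasDerivAt_uu (z : ℂ) (hz : ‖z‖ < 1) :
    HasDerivAt uu (uu₂ z) z := by
  have hV := hasDerivAt_VV z
  have hE := hasDerivAt_EE z
  have hVne := VV_ne_zero z hz
  have hnum : HasDerivAt (fun w => 3 * w^2 * EE w)
      ((3 * (2*z) ) * EE z + 3*z^2 * (-6*z^2 * EE z)) z := by
    have hp : HasDerivAt (fun w : ℂ => 3 * w^2) (3 * (2*z)) z := by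
      simpa using (hasDerivAt_pow 2 z).const_mul (3:ℂ)
    exact hp.mul hE
  have := hnum.div hV hVne
  refine this.congr_deriv ?_
  rw [uu₂]
  have hE1 : VV z - EE z = 1 := by rw [VV]; ring
  field_simp
  have hV' : VV z = 1 + EE z := rfl
  rw [hV']
  ring

lemma hasDerivAt_uu₂_zero : HasDerivAt uu₂ 3 0 := by
  have hE := hasDerivAt_EE 0
  have hV := hasDerivAt_VV 0
  have hVne : VV 0 ≠ 0 := by rw [VV_zero]; norm_num
  have h1 : HasDerivAt (fun w => 6*w*EE w/VV w)
      (((6 * EE 0 + 6*0*(-6*0^2*EE 0)) * VV 0 - 6*0*EE 0 * (-6*0^2*EE 0)) / (VV 0)^2) 0 := by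
    have ha : HasDerivAt (fun w : ℂ => 6*w) (6:ℂ) 0 := by
      simpa using (hasDerivAt_id (0:ℂ)).const_mul (6:ℂ)
    exact ((ha.mul hE).div hV hVne)
  have h2 : HasDerivAt (fun w => 18*w^4*EE w/(VV w)^2)
      (((18*(4*0^3) * EE 0 + 18*0^4*(-6*0^2*EE 0)) * (VV 0)^2 - 18*0^4*EE 0 * (2 * VV 0 * (-6*0^2*EE 0))) / ((VV 0)^2)^2) 0 := by
    have ha : HasDerivAt (fun w : ℂ => 18*w^4) (18*(4*0^3) : ℂ) 0 := by
      simpa using (hasDerivAt_pow 4 (0:ℂ)).const_mul (18:ℂ)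
    have hV2 : HasDerivAt (fun w => (VV w)^2) (2 * VV 0 * (-6*0^2*EE 0)) 0 := by
      simpa [pow_one] using hV.fun_pow 2
    have hV2ne : (VV 0)^2 ≠ 0 := pow_ne_zero 2 hVne
    exact ((ha.mul hE).div hV2 hV2ne)
  have h := h1.sub h2
  refine (h.congr_of_eventuallyEq ?_).congr_deriv ?_
  · exact Filter.Eventually.of_forall fun w => by rw [uu₂]; rfl
  · rw [EE_zero, VV_zero]; norm_num

lemma gg_zero : gg 0 = 1 := by
  rw [gg]
  norm_num [Complex.tanh_zero, psqrt, Complex.log_one]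

lemma re_gg_pos (z : ℂ) (hz : ‖z‖ < 1) : 0 < (gg z).re := by
  rw [gg_eq z hz, Complex.exp_re]
  have harg : |Complex.arg (2 / VV z)| < Real.pi := by
    have h1 := Complex.slitPlane_arg_ne_pi (two_div_VV_mem_slitPlane z hz)
    have h2 := Complex.arg_le_pi (2 / VV z)
    have h3 := Complex.neg_pi_lt_arg (2 / VV z)
    rw [abs_lt]
    exact ⟨h3, lt_of_le_of_ne h2 h1⟩
  have him : ((1/2:ℂ) * Complex.log (2 / VV z)).im = Complex.arg (2 / VV z) / 2 := by
    rw [Complex.mul_im]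
    simp [Complex.log_im]
    ring
  rw [him]
  have hcos : 0 < Real.cos (Complex.arg (2 / VV z) / 2) := by
    apply Real.cos_pos_of_mem_Ioo
    constructor
    · rw [abs_lt] at harg; linarith [harg.1]
    · rw [abs_lt] at harg; linarith [harg.2]
  positivity

lemma continuousOn_gg : ContinuousOn gg (ball (0:ℂ) 1) := fun z hz =>
  (hasDerivAt_gg z (mem_ball_iff_abs.1 hz)).continuousAt.continuousWithinAt

lemma continuousOn_dgg : ContinuousOn (fun z => uu z * gg z) (ball (0:ℂ) 1) := by
  apply ContinuousOn.mul ?_ continuousOn_gg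
  intro z hz
  exact (hasDerivAt_uu z (mem_ball_iff_abs.1 hz)).continuousAt.continuousWithinAt

lemma f₃_eq (z : ℂ) : f₃ z = ∫ t in (0:ℝ)..1, z * gg ((t:ℂ)*z) := rfl

noncomputable def FF' (x : ℂ) (t : ℝ) : ℂ :=
  gg ((t:ℂ)*x) + (t:ℂ)*x * (uu ((t:ℂ)*x) * gg ((t:ℂ)*x))

lemma abs_coe_mul_le {t : ℝ} (ht : |t| ≤ 1) {x : ℂ} {r : ℝ} (hx : ‖x‖ ≤ r) :
    ‖(t:ℂ)*x‖ ≤ r := by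
  rw [norm_mul, Complex.norm_real, Real.norm_eq_abs]
  have h0 : (0:ℝ) ≤ ‖x‖ := norm_nonneg x
  calc |t| * ‖x‖ ≤ 1 * ‖x‖ := by
        exact mul_le_mul_of_nonneg_right ht h0
    _ = ‖x‖ := one_mul _
    _ ≤ r := hx

lemma hasDerivAt_param {t : ℝ} (ht : |t| ≤ 1) {x : ℂ} (hx : ‖x‖ < 1) :
    HasDerivAt (fun y : ℂ => y * gg ((t:ℂ)*y)) (FF' x t) x := by
  have hmem : ‖(t:ℂ)*x‖ < 1 :=
    lt_of_le_of_lt (abs_coe_mul_le ht (le_refl _)) hx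
  have hg := hasDerivAt_gg _ hmem
  have hlin : HasDerivAt (fun y : ℂ => (t:ℂ)*y) ((t:ℂ)) x := by
    simpa using (hasDerivAt_id x).const_mul (t:ℂ)
  have hcomp : HasDerivAt (gg ∘ fun y : ℂ => (t:ℂ)*y)
      ((uu ((t:ℂ)*x) * gg ((t:ℂ)*x)) * (t:ℂ)) x :=
    HasDerivAt.comp (h₂ := gg) (h := fun y : ℂ => (t:ℂ)*y) x hg hlin
  have hcomp' : HasDerivAt (fun y : ℂ => gg ((t:ℂ)*y))
      ((uu ((t:ℂ)*x) * gg ((t:ℂ)*x)) * (t:ℂ)) x := hcomp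
  have h := (hasDerivAt_id x).mul hcomp'
  simp only [id_eq] at h
  refine h.congr_deriv ?_
  rw [FF']
  ring

lemma hasDerivAt_t {z : ℂ} (hz : ‖z‖ < 1) {t : ℝ} (ht : |t| ≤ 1) :
    HasDerivAt (fun s : ℝ => (s:ℂ) * gg ((s:ℂ)*z)) (FF' z t) t := by
  have hmem : ‖(t:ℂ)*z‖ < 1 :=
    lt_of_le_of_lt (abs_coe_mul_le ht (le_refl _)) hz
  have hg := hasDerivAt_gg _ hmem
  have hlin : HasDerivAt (fun y : ℂ => y * z) z (t:ℂ) := by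
    simpa using (hasDerivAt_id ((t:ℂ))).mul_const z
  have hcomp : HasDerivAt (gg ∘ fun y : ℂ => y*z)
      ((uu ((t:ℂ)*z) * gg ((t:ℂ)*z)) * z) (t:ℂ) :=
    HasDerivAt.comp (h₂ := gg) (h := fun y : ℂ => y*z) ((t:ℝ):ℂ) hg hlin
  have hcomp' : HasDerivAt (fun y : ℂ => gg (y*z))
      ((uu ((t:ℂ)*z) * gg ((t:ℂ)*z)) * z) (t:ℂ) := hcomp
  have hC : HasDerivAt (fun y : ℂ => y * gg (y*z))
      (1 * gg ((t:ℂ)*z) + (t:ℂ) * ((uu ((t:ℂ)*z) * gg ((t:ℂ)*z)) * z)) (t:ℂ) := by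
    have h := (hasDerivAt_id ((t:ℂ))).mul hcomp'
    simp only [id_eq] at h
    exact h
  have hR := hC.comp_ofReal
  refine hR.congr_deriv ?_
  rw [FF']
  ring

lemma continuousAt_gg_comp {z : ℂ} (hz : ‖z‖ < 1) {t : ℝ} (ht : |t| ≤ 1) :
    ContinuousAt (fun s : ℝ => gg ((s:ℂ)*z)) t := by
  have hmem : ‖(t:ℂ)*z‖ < 1 :=
    lt_of_le_of_lt (abs_coe_mul_le ht (le_refl _)) hz
  have hcont : ContinuousAt (fun s : ℝ => (s:ℂ)*z) t :=
    (Complex.continuous_ofReal.mul continuous_const).continuousAt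
  exact ContinuousAt.comp (g := gg) (f := fun s : ℝ => ((s:ℂ)*z)) (x := t)
    (hasDerivAt_gg _ hmem).continuousAt hcont

lemma continuousAt_uu_comp {z : ℂ} (hz : ‖z‖ < 1) {t : ℝ} (ht : |t| ≤ 1) :
    ContinuousAt (fun s : ℝ => uu ((s:ℂ)*z)) t := by
  have hmem : ‖(t:ℂ)*z‖ < 1 :=
    lt_of_le_of_lt (abs_coe_mul_le ht (le_refl _)) hz
  have hcont : ContinuousAt (fun s : ℝ => (s:ℂ)*z) t :=
    (Complex.continuous_ofReal.mul continuous_const).continuousAt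
  exact ContinuousAt.comp (g := uu) (f := fun s : ℝ => ((s:ℂ)*z)) (x := t)
    (hasDerivAt_uu _ hmem).continuousAt hcont

lemma abs_le_one_of_mem_uIcc {t : ℝ} (ht : t ∈ Set.uIcc (0:ℝ) 1) : |t| ≤ 1 := by
  rw [Set.uIcc_of_le (by norm_num : (0:ℝ) ≤ 1)] at ht
  rw [abs_le]; exact ⟨by linarith [ht.1], ht.2⟩

lemma continuousOn_FF' {z : ℂ} (hz : ‖z‖ < 1) :
    ContinuousOn (fun t : ℝ => FF' z t) (Set.uIcc (0:ℝ) 1) := by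
  intro t ht
  have h1 := continuousAt_gg_comp hz (abs_le_one_of_mem_uIcc ht)
  have h2 := continuousAt_uu_comp hz (abs_le_one_of_mem_uIcc ht)
  have h3 : ContinuousAt (fun s : ℝ => (s:ℂ)*z) t :=
    (Complex.continuous_ofReal.mul continuous_const).continuousAt
  exact (h1.add ((h3.mul (h2.mul h1)))).continuousWithinAt

lemma continuousOn_integrand {x : ℂ} (hx : ‖x‖ < 1) :
    ContinuousOn (fun t : ℝ => x * gg ((t:ℂ)*x)) (Set.uIcc (0:ℝ) 1) := by
  intro t ht
  exact (continuousAt_const.mul (continuousAt_gg_comp hx (abs_le_one_of_mem_uIcc ht))).continuousWithinAt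

lemma integral_FF' {z : ℂ} (hz : ‖z‖ < 1) :
    (∫ t in (0:ℝ)..1, FF' z t) = gg z := by
  have hFTC := intervalIntegral.integral_eq_sub_of_hasDerivAt
    (f := fun s : ℝ => (s:ℂ) * gg ((s:ℂ)*z)) (f' := fun t => FF' z t) (a := 0) (b := 1)
    (fun t ht => hasDerivAt_t hz (abs_le_one_of_mem_uIcc ht))
    ((continuousOn_FF' hz).intervalIntegrable)
  rw [hFTC]
  norm_num

lemma hasDerivAt_f₃ (z : ℂ) (hz : ‖z‖ < 1) : HasDerivAt f₃ (gg z) z := by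
  set ε : ℝ := (1 - ‖z‖)/2 with hε
  set r : ℝ := (‖z‖ + 1)/2 with hr
  have hε_pos : 0 < ε := by rw [hε]; linarith
  have hr1 : r < 1 := by rw [hr]; linarith
  have hr0 : 0 ≤ r := by rw [hr]; positivity
  have hball : ∀ x ∈ ball z ε, ‖x‖ ≤ r := by
    intro x hx
    rw [mem_ball, Complex.dist_eq] at hx
    calc ‖x‖ = ‖z + (x - z)‖ := by ring_nf
      _ ≤ ‖z‖ + ‖x - z‖ := norm_add_le _ _
      _ ≤ ‖z‖ + ε := by linarith
      _ = r := by rw [hε, hr]; ring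
  have hsub : closedBall (0:ℂ) r ⊆ ball (0:ℂ) 1 := by
    intro w hw
    rw [mem_closedBall, Complex.dist_eq, sub_zero] at hw
    exact mem_ball_iff_abs.2 (lt_of_le_of_lt hw hr1)
  have hcpt : IsCompact (closedBall (0:ℂ) r) := isCompact_closedBall _ _
  obtain ⟨Mg, hMg⟩ := hcpt.exists_bound_of_continuousOn (continuousOn_gg.mono hsub)
  have huu_cont : ContinuousOn uu (ball (0:ℂ) 1) := fun w hw =>
    (hasDerivAt_uu w (mem_ball_iff_abs.1 hw)).continuousAt.continuousWithinAt
  obtain ⟨Mu, hMu⟩ := hcpt.exists_bound_of_continuousOn (huu_cont.mono hsub)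
  have hMg0 : 0 ≤ Mg := le_trans (norm_nonneg _) (hMg 0 (mem_closedBall_self hr0))
  have hMu0 : 0 ≤ Mu := le_trans (norm_nonneg _) (hMu 0 (mem_closedBall_self hr0))
  have hmemcb : ∀ (t : ℝ), |t| ≤ 1 → ∀ x ∈ ball z ε, ((t:ℂ)*x) ∈ closedBall (0:ℂ) r := by
    intro t ht x hx
    rw [mem_closedBall, Complex.dist_eq, sub_zero]
    exact abs_coe_mul_le ht (hball x hx)
  have hzballself : z ∈ ball z ε := mem_ball_self hε_pos
  have hkey := intervalIntegral.hasDerivAt_integral_of_dominated_loc_of_deriv_le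
    (𝕜 := ℂ) (μ := MeasureTheory.volume) (F := fun x t => x * gg ((t:ℂ)*x)) (F' := FF')
    (x₀ := z) (a := 0) (b := 1) (bound := fun _ => Mg + Mu * Mg) (ball_mem_nhds z hε_pos)
    ?_ ?_ ?_ ?_ ?_ ?_
  · have hder := hkey.2
    have : f₃ = fun x => ∫ t in (0:ℝ)..1, x * gg ((t:ℂ)*x) := rfl
    rw [integral_FF' hz] at hder
    exact this ▸ hder
  · -- hF_meas
    refine Filter.eventually_of_mem (isOpen_ball.mem_nhds hzballself) ?_
    intro x hx
    have hx1 : ‖x‖ < 1 := lt_of_le_of_lt (hball x hx) hr1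
    exact ((continuousOn_integrand hx1).mono
      (Set.uIoc_subset_uIcc (α := ℝ))).aestronglyMeasurable measurableSet_uIoc
  · -- hF_int
    have hz1 : ‖z‖ < 1 := hz
    exact (continuousOn_integrand hz1).intervalIntegrable
  · -- hF'_meas
    exact ((continuousOn_FF' hz).mono (Set.uIoc_subset_uIcc (α := ℝ))).aestronglyMeasurable
      measurableSet_uIoc
  · -- h_bound
    refine MeasureTheory.ae_of_all _ ?_
    intro t ht x hx
    have ht1 : |t| ≤ 1 := by
      rw [Set.uIoc_of_le (by norm_num : (0:ℝ) ≤ 1)] at ht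
      rw [abs_le]; exact ⟨by linarith [ht.1], ht.2⟩
    have hmem := hmemcb t ht1 x hx
    have h1 : ‖gg ((t:ℂ)*x)‖ ≤ Mg := hMg _ hmem
    have h2 : ‖uu ((t:ℂ)*x)‖ ≤ Mu := hMu _ hmem
    have h3 : ‖(t:ℂ)*x‖ ≤ 1 := le_trans (abs_coe_mul_le ht1 (hball x hx)) (le_of_lt hr1)
    rw [FF']
    calc ‖gg ((t:ℂ)*x) + (t:ℂ)*x * (uu ((t:ℂ)*x) * gg ((t:ℂ)*x))‖
        ≤ ‖gg ((t:ℂ)*x)‖ + ‖(t:ℂ)*x * (uu ((t:ℂ)*x) * gg ((t:ℂ)*x))‖ := norm_add_le _ _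
      _ ≤ Mg + Mu * Mg := by
          have h4 : ‖(t:ℂ)*x * (uu ((t:ℂ)*x) * gg ((t:ℂ)*x))‖
              = ‖(t:ℂ)*x‖ * (‖uu ((t:ℂ)*x)‖ * ‖gg ((t:ℂ)*x)‖) := by
            simp [norm_mul]
          rw [h4]
          have h5 := mul_le_mul h2 h1 (norm_nonneg _) hMu0
          have h6 : ‖(t:ℂ)*x‖ * (‖uu ((t:ℂ)*x)‖ * ‖gg ((t:ℂ)*x)‖)
              ≤ ‖uu ((t:ℂ)*x)‖ * ‖gg ((t:ℂ)*x)‖ := by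
            have hnn : (0:ℝ) ≤ ‖uu ((t:ℂ)*x)‖ * ‖gg ((t:ℂ)*x)‖ := by positivity
            calc ‖(t:ℂ)*x‖ * (‖uu ((t:ℂ)*x)‖ * ‖gg ((t:ℂ)*x)‖)
                ≤ 1 * (‖uu ((t:ℂ)*x)‖ * ‖gg ((t:ℂ)*x)‖) := mul_le_mul_of_nonneg_right h3 hnn
              _ = _ := one_mul _
          linarith
  · exact intervalIntegrable_const
  · -- h_diff
    refine MeasureTheory.ae_of_all _ ?_
    intro t ht x hx
    have ht1 : |t| ≤ 1 := by
      rw [Set.uIoc_of_le (by norm_num : (0:ℝ) ≤ 1)] at ht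
      rw [abs_le]; exact ⟨by linarith [ht.1], ht.2⟩
    exact hasDerivAt_param ht1 (lt_of_le_of_lt (hball x hx) hr1)

lemma seg_mem {a b : ℂ} (ha : ‖a‖ < 1) (hb : ‖b‖ < 1)
    {t : ℝ} (ht0 : 0 ≤ t) (ht1 : t ≤ 1) : ‖a + (t:ℂ)*(b-a)‖ < 1 := by
  have he : a + (t:ℂ)*(b-a) = ((1-t : ℝ):ℂ)*a + (t:ℂ)*b := by push_cast; ring
  rw [he]
  have h1 : ‖((1-t : ℝ):ℂ)*a + (t:ℂ)*b‖
      ≤ (1-t) * ‖a‖ + t * ‖b‖ := by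
    calc ‖((1-t : ℝ):ℂ)*a + (t:ℂ)*b‖
        ≤ ‖((1-t : ℝ):ℂ)*a‖ + ‖(t:ℂ)*b‖ := norm_add_le _ _
      _ = (1-t) * ‖a‖ + t * ‖b‖ := by
          rw [norm_mul, norm_mul, Complex.norm_real, Real.norm_eq_abs, Complex.norm_real, Real.norm_eq_abs,
            _root_.abs_of_nonneg (by linarith : (0:ℝ) ≤ 1 - t), _root_.abs_of_nonneg ht0]
  have hm1 : ‖a‖ ≤ max (‖a‖) (‖b‖) := le_max_left _ _
  have hm2 : ‖b‖ ≤ max (‖a‖) (‖b‖) := le_max_right _ _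
  have hmlt : max (‖a‖) (‖b‖) < 1 := max_lt ha hb
  nlinarith

lemma hasDerivAt_seg {a b : ℂ} (ha : ‖a‖ < 1) (hb : ‖b‖ < 1)
    {t : ℝ} (ht0 : 0 ≤ t) (ht1 : t ≤ 1) :
    HasDerivAt (fun s : ℝ => f₃ (a + (s:ℂ)*(b-a))) ((b-a) * gg (a + (t:ℂ)*(b-a))) t := by
  have hmem := seg_mem ha hb ht0 ht1
  have hf := hasDerivAt_f₃ _ hmem
  have hlin : HasDerivAt (fun w : ℂ => a + w*(b-a)) (b-a) (t:ℂ) := by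
    simpa using ((hasDerivAt_id ((t:ℂ))).mul_const (b-a)).const_add a
  have hcomp : HasDerivAt (f₃ ∘ fun w : ℂ => a + w*(b-a))
      (gg (a + (t:ℂ)*(b-a)) * (b-a)) (t:ℂ) :=
    HasDerivAt.comp (h₂ := f₃) (h := fun w : ℂ => a + w*(b-a)) ((t:ℝ):ℂ) hf hlin
  have hcomp' : HasDerivAt (fun w : ℂ => f₃ (a + w*(b-a)))
      (gg (a + (t:ℂ)*(b-a)) * (b-a)) (t:ℂ) := hcomp
  have := hcomp'.comp_ofReal
  exact this.congr_deriv (by ring)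

lemma continuousOn_gg_seg {a b : ℂ} (ha : ‖a‖ < 1) (hb : ‖b‖ < 1) :
    ContinuousOn (fun t : ℝ => gg (a + (t:ℂ)*(b-a))) (Set.Icc (0:ℝ) 1) := by
  intro t ht
  have hmem := seg_mem ha hb ht.1 ht.2
  have hcont : ContinuousAt (fun s : ℝ => a + (s:ℂ)*(b-a)) t :=
    (continuous_const.add (Complex.continuous_ofReal.mul continuous_const)).continuousAt
  exact (ContinuousAt.comp (g := gg) (f := fun s : ℝ => a + (s:ℂ)*(b-a)) (x := t)
    (hasDerivAt_gg _ hmem).continuousAt hcont).continuousWithinAt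

lemma f₃_injOn : Set.InjOn f₃ (ball (0:ℂ) 1) := by
  intro a ha b hb hab
  by_contra hne
  have ha1 := mem_ball_iff_abs.1 ha
  have hb1 := mem_ball_iff_abs.1 hb
  have hc : b - a ≠ 0 := sub_ne_zero.2 (Ne.symm hne)
  have hIcc : Set.uIcc (0:ℝ) 1 = Set.Icc 0 1 := Set.uIcc_of_le (by norm_num)
  have hcontg := continuousOn_gg_seg ha1 hb1
  have hcont' : ContinuousOn (fun t : ℝ => (b-a) * gg (a + (t:ℂ)*(b-a))) (Set.Icc (0:ℝ) 1) :=
    continuousOn_const.mul hcontg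
  have hFTC := intervalIntegral.integral_eq_sub_of_hasDerivAt
    (f := fun s : ℝ => f₃ (a + (s:ℂ)*(b-a)))
    (f' := fun t : ℝ => (b-a) * gg (a + (t:ℂ)*(b-a))) (a := 0) (b := 1)
    (fun t ht => hasDerivAt_seg ha1 hb1 (hIcc ▸ ht).1 (hIcc ▸ ht).2)
    (by rw [intervalIntegrable_iff_integrableOn_Icc_of_le (by norm_num : (0:ℝ) ≤ 1)]
        exact hcont'.integrableOn_Icc)
  simp only [Complex.ofReal_one, Complex.ofReal_zero, one_mul, zero_mul, add_zero] at hFTC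
  have hba : a + (b - a) = b := by ring
  rw [hba, hab] at hFTC
  have hint0 : (∫ t in (0:ℝ)..1, (b-a) * gg (a + (t:ℂ)*(b-a))) = 0 := by
    rw [hFTC]; ring
  rw [intervalIntegral.integral_const_mul] at hint0
  have hint0' : (∫ t in (0:ℝ)..1, gg (a + (t:ℂ)*(b-a))) = 0 :=
    (mul_eq_zero.1 hint0).resolve_left hc
  -- now real parts
  have hInt : MeasureTheory.IntegrableOn (fun t : ℝ => gg (a + (t:ℂ)*(b-a)))
      (Set.Ioc (0:ℝ) 1) := (hcontg.integrableOn_Icc).mono_set Set.Ioc_subset_Icc_self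
  have hre : (∫ t in Set.Ioc (0:ℝ) 1, gg (a + (t:ℂ)*(b-a))).re
      = ∫ t in Set.Ioc (0:ℝ) 1, (gg (a + (t:ℂ)*(b-a))).re := by
    have := (Complex.reCLM.integral_comp_comm hInt).symm
    simpa using this
  have hset : (∫ t in (0:ℝ)..1, gg (a + (t:ℂ)*(b-a)))
      = ∫ t in Set.Ioc (0:ℝ) 1, gg (a + (t:ℂ)*(b-a)) :=
    intervalIntegral.integral_of_le (by norm_num)
  have hsetre : (∫ t in (0:ℝ)..1, (gg (a + (t:ℂ)*(b-a))).re)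
      = ∫ t in Set.Ioc (0:ℝ) 1, (gg (a + (t:ℂ)*(b-a))).re :=
    intervalIntegral.integral_of_le (by norm_num)
  have hpos : 0 < ∫ t in (0:ℝ)..1, (gg (a + (t:ℂ)*(b-a))).re := by
    apply intervalIntegral.integral_pos (by norm_num)
    · exact Complex.continuous_re.comp_continuousOn hcontg
    · intro x hx
      exact le_of_lt (re_gg_pos _ (seg_mem ha1 hb1 (le_of_lt hx.1) hx.2))
    · exact ⟨1/2, by norm_num, re_gg_pos _ (seg_mem ha1 hb1 (by norm_num) (by norm_num))⟩
  rw [hsetre, ← hre, ← hset, hint0'] at hpos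
  simp at hpos

lemma zero_mem_ball01 : (0:ℂ) ∈ ball (0:ℂ) 1 := mem_ball_self one_pos
lemma ball_mem_nhds0 : ball (0:ℂ) 1 ∈ nhds (0:ℂ) := isOpen_ball.mem_nhds zero_mem_ball01

lemma ev_df₃ : deriv f₃ =ᶠ[nhds (0:ℂ)] gg :=
  Filter.eventuallyEq_of_mem ball_mem_nhds0 fun z hz =>
    (hasDerivAt_f₃ z (mem_ball_iff_abs.1 hz)).deriv

lemma ev_dgg : deriv gg =ᶠ[nhds (0:ℂ)] fun z => uu z * gg z :=
  Filter.eventuallyEq_of_mem ball_mem_nhds0 fun z hz =>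
    (hasDerivAt_gg z (mem_ball_iff_abs.1 hz)).deriv

lemma ev_dd1 : deriv (fun z => uu z * gg z) =ᶠ[nhds (0:ℂ)]
    fun z => uu₂ z * gg z + uu z * (uu z * gg z) :=
  Filter.eventuallyEq_of_mem ball_mem_nhds0 fun z hz =>
    ((hasDerivAt_uu z (mem_ball_iff_abs.1 hz)).mul
      (hasDerivAt_gg z (mem_ball_iff_abs.1 hz))).deriv

lemma abs0lt : ‖(0:ℂ)‖ < 1 := by simp

lemma deriv_gg_zero : deriv gg 0 = 0 := by
  rw [(hasDerivAt_gg 0 abs0lt).deriv, uu_zero, zero_mul]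

lemma deriv_d1_zero : deriv (fun z => uu z * gg z) 0 = 0 := by
  rw [((hasDerivAt_uu 0 abs0lt).fun_mul (hasDerivAt_gg 0 abs0lt)).deriv, uu_zero, uu₂_zero]
  ring

lemma deriv_d2_zero :
    deriv (fun z => uu₂ z * gg z + uu z * (uu z * gg z)) 0 = 3 := by
  have h : HasDerivAt (fun z => uu₂ z * gg z + uu z * (uu z * gg z)) _ 0 := (hasDerivAt_uu₂_zero.mul (hasDerivAt_gg 0 abs0lt)).add
    ((hasDerivAt_uu 0 abs0lt).mul ((hasDerivAt_uu 0 abs0lt).mul (hasDerivAt_gg 0 abs0lt)))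
  rw [h.deriv, uu_zero, uu₂_zero, gg_zero]
  ring

lemma itD2 : iteratedDeriv 2 f₃ 0 = 0 := by
  rw [iteratedDeriv_succ', Filter.EventuallyEq.iteratedDeriv_eq 1 ev_df₃,
    iteratedDeriv_one, deriv_gg_zero]

lemma itD3 : iteratedDeriv 3 f₃ 0 = 0 := by
  rw [iteratedDeriv_succ', Filter.EventuallyEq.iteratedDeriv_eq 2 ev_df₃,
    iteratedDeriv_succ', Filter.EventuallyEq.iteratedDeriv_eq 1 ev_dgg,
    iteratedDeriv_one, deriv_d1_zero]

lemma itD4 : iteratedDeriv 4 f₃ 0 = 3 := by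
  rw [iteratedDeriv_succ', Filter.EventuallyEq.iteratedDeriv_eq 3 ev_df₃,
    iteratedDeriv_succ', Filter.EventuallyEq.iteratedDeriv_eq 2 ev_dgg,
    iteratedDeriv_succ', Filter.EventuallyEq.iteratedDeriv_eq 1 ev_dd1,
    iteratedDeriv_one, deriv_d2_zero]

lemma f₃_zero : f₃ 0 = 0 := by
  rw [f₃_eq]
  simp

lemma deriv_f₃_zero : deriv f₃ 0 = 1 := by
  rw [(hasDerivAt_f₃ 0 abs0lt).deriv, gg_zero]

theorem BTB_gamma3_sharp :
    IsBTB f₃ ∧ tCoeff f₃ 2 = 0 ∧ tCoeff f₃ 3 = 0 ∧ tCoeff f₃ 4 = 1/8 ∧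
      ‖(1/2) * (tCoeff f₃ 4 - tCoeff f₃ 2 * tCoeff f₃ 3 + (tCoeff f₃ 2)^3 / 3)‖
        = 1/16 := by
  have hA : AnalyticOnNhd ℂ f₃ (ball 0 1) :=
    DifferentiableOn.analyticOnNhd
      (fun z hz => (hasDerivAt_f₃ z (mem_ball_iff_abs.1 hz)).differentiableAt.differentiableWithinAt)
      isOpen_ball
  have hω : AnalyticOnNhd ℂ (fun z : ℂ => z^3) (ball 0 1) :=
    ((differentiable_pow 3).differentiableOn).analyticOnNhd isOpen_ball
  have hc2 : tCoeff f₃ 2 = 0 := by rw [tCoeff, itD2]; simp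
  have hc3 : tCoeff f₃ 3 = 0 := by rw [tCoeff, itD3]; simp
  have hc4 : tCoeff f₃ 4 = 1/8 := by
    rw [tCoeff, itD4]
    norm_num [Nat.factorial]
  refine ⟨⟨hA, f₃_zero, deriv_f₃_zero, f₃_injOn, fun z => z^3, hω, by norm_num, ?_, ?_⟩,
    hc2, hc3, hc4, ?_⟩
  · intro z hz
    rw [norm_pow]
    exact pow_lt_one₀ (norm_nonneg z) (mem_ball_iff_abs.1 hz) (by norm_num)
  · intro z hz
    exact (hasDerivAt_f₃ z (mem_ball_iff_abs.1 hz)).deriv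
  · rw [hc2, hc3, hc4]
    rw [show ((1/2 : ℂ) * (1/8 - 0*0 + 0^3/3)) = ((1/16 : ℝ) : ℂ) by norm_num]
    rw [Complex.norm_real]
    norm_num
end
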